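/- At most 5 points can be placed in the plane such that each point is within Euclidean distance 1 of a common point p, while every two of the points are at distance strictly greater than 1 from each other. Equivalently: if S is a set of points in the closed unit disk centered at p with pairwise distances > 1, then |S| ≤ 5. -/

import Mathlib

noncomputable section

abbrev Plane := EuclideanSpace ℝ (Fin 2)

open Complex Real

/-- Law-of-cosines key lemma: two points in the closed unit disk (as complex numbers)
whose arguments differ by an angle with cosine at least 1/2 are at distance at most 1. -/
lemma key_lemma (u v : ℂ) (hu : ‖u‖ ≤ 1) (hv : ‖v‖ ≤ 1)
    (hc : (1:ℝ)/2 ≤ Real.cos (u.arg - v.arg)) : ‖u - v‖ ≤ 1 := by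
  have hure := Complex.norm_mul_cos_arg u
  have huim := Complex.norm_mul_sin_arg u
  have hvre := Complex.norm_mul_cos_arg v
  have hvim := Complex.norm_mul_sin_arg v
  have hcs : Real.cos (u.arg - v.arg)
      = Real.cos u.arg * Real.cos v.arg + Real.sin u.arg * Real.sin v.arg :=
    Real.cos_sub _ _
  have hsq : (‖u - v‖)^2 = (u.re - v.re)^2 + (u.im - v.im)^2 := by
    rw [Complex.sq_norm, Complex.normSq_apply, Complex.sub_re, Complex.sub_im]; ring
  rw [← hure, ← huim, ← hvre, ← hvim] at hsq
  have ha : 0 ≤ ‖u‖ := norm_nonneg _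
  have hb : 0 ≤ ‖v‖ := norm_nonneg _
  have hd : 0 ≤ ‖u - v‖ := norm_nonneg _
  have hpu := Real.sin_sq_add_cos_sq u.arg
  have hpv := Real.sin_sq_add_cos_sq v.arg
  rw [hcs] at hc
  have hd2 : (‖u - v‖)^2 = (‖u‖)^2 + (‖v‖)^2
      - 2 * (‖u‖ * ‖v‖)
        * (Real.cos u.arg * Real.cos v.arg + Real.sin u.arg * Real.sin v.arg) := by
    rw [hsq]
    linear_combination (‖u‖)^2 * hpu + (‖v‖)^2 * hpv
  have hab : 0 ≤ ‖u‖ * ‖v‖ := mul_nonneg ha hb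
  have hle : (‖u - v‖)^2 ≤ 1 := by
    nlinarith [mul_nonneg ha (sub_nonneg.mpr hu), mul_nonneg hb (sub_nonneg.mpr hv),
      mul_nonneg (mul_nonneg ha hb) (sub_nonneg.mpr hc),
      mul_nonneg (sub_nonneg.mpr hu) (sub_nonneg.mpr hv)]
  nlinarith [hle, hd]

lemma cos_ge_half {t : ℝ} (h : |t| ≤ Real.pi / 3) : (1:ℝ)/2 ≤ Real.cos t := by
  have h1 : Real.cos (Real.pi / 3) ≤ Real.cos |t| := by
    apply Real.cos_le_cos_of_nonneg_of_le_pi (abs_nonneg t)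
    · linarith [Real.pi_pos]
    · exact h
  rw [Real.cos_abs] at h1
  rw [Real.cos_pi_div_three] at h1
  linarith

theorem five_points_in_unit_disk (p : Plane) (S : Finset Plane)
    (h1 : ∀ x ∈ S, dist x p ≤ 1)
    (h2 : ∀ x ∈ S, ∀ y ∈ S, x ≠ y → 1 < dist x y) :
    S.card ≤ 5 := by
  classical
  by_contra hcard
  push_neg at hcard
  -- complex representation of x - p
  set z : Plane → ℂ := fun x => ⟨x 0 - p 0, x 1 - p 1⟩ with hz
  have habs : ∀ x y : Plane, ‖z x - z y‖ = dist x y := by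
    intro x y
    rw [EuclideanSpace.dist_eq]
    simp only [hz, Complex.norm_def, Complex.normSq_apply, Complex.sub_re, Complex.sub_im,
      Fin.sum_univ_two, Real.dist_eq, _root_.sq_abs]
    congr 1 <;> ring
  have habsp : ∀ x : Plane, ‖z x‖ = dist x p := by
    intro x
    rw [EuclideanSpace.dist_eq]
    simp only [hz, Complex.norm_def, Complex.normSq_apply, Fin.sum_univ_two, Real.dist_eq, _root_.sq_abs]
    congr 1 <;> ring
  set θ : Plane → ℝ := fun x => (z x).arg with hθ
  -- the core step: two points of S with close directions give a contradiction
  have core : ∀ x ∈ S, ∀ y ∈ S, x ≠ y → (1:ℝ)/2 ≤ Real.cos (θ x - θ y) → False := by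
    intro x hx y hy hxy hcos
    have := key_lemma (z x) (z y) (by rw [habsp]; exact h1 x hx)
      (by rw [habsp]; exact h1 y hy) hcos
    rw [habs] at this
    exact absurd (h2 x hx y hy hxy) (not_lt.mpr this)
  -- pick the point with minimal argument
  have hne : S.Nonempty := Finset.card_pos.mp (by omega)
  obtain ⟨x₀, hx₀, hmin⟩ := S.exists_min_image θ hne
  set S' := S.erase x₀ with hS'
  have hS'card : 5 ≤ S'.card := by
    rw [hS', Finset.card_erase_of_mem hx₀]; omega
  have hS'sub : ∀ y ∈ S', y ∈ S := fun y hy => Finset.mem_of_mem_erase hy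
  have hrange : ∀ y ∈ S', 0 ≤ θ y - θ x₀ ∧ θ y - θ x₀ < 2 * Real.pi := by
    intro y hy
    refine ⟨by linarith [hmin y (hS'sub y hy)], ?_⟩
    have h1' := Complex.arg_le_pi (z y)
    have h2' := Complex.neg_pi_lt_arg (z x₀)
    simp only [hθ]
    linarith
  by_cases hA : ∀ y ∈ S', Real.pi / 3 ≤ θ y - θ x₀ ∧ θ y - θ x₀ < 5 * Real.pi / 3
  · -- all other points have direction difference in [π/3, 5π/3): pigeonhole 5 into 4 buckets
    have hpi := Real.pi_pos
    have hmaps : ∀ y ∈ S', ⌊(θ y - θ x₀) / (Real.pi / 3)⌋ ∈ Finset.Icc (1:ℤ) 4 := by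
      intro y hy
      obtain ⟨hl, hr⟩ := hA y hy
      have hp3 : 0 < Real.pi / 3 := by linarith
      rw [Finset.mem_Icc]
      constructor
      · apply Int.le_floor.mpr
        rw [Int.cast_one, le_div_iff₀ hp3]; linarith
      · have : (θ y - θ x₀) / (Real.pi / 3) < 5 := by
          rw [div_lt_iff₀ hp3]; linarith
        have h5 : ⌊(θ y - θ x₀) / (Real.pi / 3)⌋ < (5:ℤ) :=
          Int.floor_lt.mpr (by push_cast; linarith)
        omega
    obtain ⟨y, hy, w, hw, hyw, hfl⟩ :=
      Finset.exists_ne_map_eq_of_card_lt_of_maps_to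
        (t := Finset.Icc (1:ℤ) 4) (by simp; omega) hmaps
    have hp3 : 0 < Real.pi / 3 := by linarith
    -- same floor ⇒ angle difference < π/3
    have hclose : |θ y - θ w| ≤ Real.pi / 3 := by
      have hy1 := Int.floor_le ((θ y - θ x₀) / (Real.pi / 3))
      have hy2 := Int.lt_floor_add_one ((θ y - θ x₀) / (Real.pi / 3))
      have hw1 := Int.floor_le ((θ w - θ x₀) / (Real.pi / 3))
      have hw2 := Int.lt_floor_add_one ((θ w - θ x₀) / (Real.pi / 3))
      rw [hfl] at hy1 hy2
      rw [abs_le]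
      constructor <;> [skip; skip] <;>
      · have e1 : θ y - θ x₀ = ((θ y - θ x₀) / (Real.pi / 3)) * (Real.pi / 3) := by
          field_simp
        have e2 : θ w - θ x₀ = ((θ w - θ x₀) / (Real.pi / 3)) * (Real.pi / 3) := by
          field_simp
        nlinarith
    exact core y (hS'sub y hy) w (hS'sub w hw) hyw (cos_ge_half hclose)
  · -- some point has direction difference in [0, π/3) ∪ [5π/3, 2π): pair it with x₀
    push_neg at hA
    obtain ⟨y, hy, hbad⟩ := hA
    obtain ⟨h0, h2pi⟩ := hrange y hy
    have hyne : y ≠ x₀ := Finset.ne_of_mem_erase hy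
    have hpi := Real.pi_pos
    have hcos : (1:ℝ)/2 ≤ Real.cos (θ y - θ x₀) := by
      by_cases hsmall : θ y - θ x₀ < Real.pi / 3
      · exact cos_ge_half (by rw [abs_le]; constructor <;> linarith)
      · push_neg at hsmall
        have h5 : 5 * Real.pi / 3 ≤ θ y - θ x₀ := hbad hsmall
        have : Real.cos (θ y - θ x₀) = Real.cos (θ y - θ x₀ - 2 * Real.pi) :=
          (Real.cos_sub_two_pi _).symm
        rw [this]
        exact cos_ge_half (by rw [abs_le]; constructor <;> linarith)
    exact core y (hS'sub y hy) x₀ hx₀ hyne hcos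

end
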